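/- Let α : [0,s₀] → R^n be given coordinatewise by αᵢ(s) = Pᵢ(s)/Qᵢ(s) where each Pᵢ, Qᵢ is a real polynomial of degree at most 2 and Qᵢ is nonvanishing on [0,s₀], and suppose ‖α(s)‖∞ ≤ R for all s ∈ [0,s₀] (each |αᵢ(s)| ≤ R). Then the Euclidean length of α, ∫₀^{s₀} ‖α'(s)‖ ds, is at most 8nR. -/

import Mathlib

lemma sign_const_case (R : ℝ) (f g : ℝ → ℝ) (a b : ℝ) (hab : a ≤ b)
    (hg : ContinuousOn g (Set.Icc a b))
    (hf : ∀ x ∈ Set.Icc a b, HasDerivAt f (g x) x)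
    (hfR : ∀ x ∈ Set.Icc a b, |f x| ≤ R)
    (hz : ∀ x ∈ Set.Ioo a b, g x ≠ 0) :
    ∫ x in a..b, |g x| ≤ 2 * R := by
  have hguIcc : ContinuousOn g (Set.uIcc a b) := by rwa [Set.uIcc_of_le hab]
  have hint : IntervalIntegrable g MeasureTheory.volume a b := hguIcc.intervalIntegrable
  have hFTC : ∫ x in a..b, g x = f b - f a :=
    intervalIntegral.integral_eq_sub_of_hasDerivAt
      (fun x hx => hf x (by rwa [Set.uIcc_of_le hab] at hx)) hint
  have hfb : |f b - f a| ≤ 2 * R := by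
    have h1 := hfR a ⟨le_rfl, hab⟩
    have h2 := hfR b ⟨hab, le_rfl⟩
    calc |f b - f a| ≤ |f b| + |f a| := abs_sub _ _
      _ ≤ 2 * R := by linarith
  have hsign : (∀ x ∈ Set.Ioo a b, 0 ≤ g x) ∨ (∀ x ∈ Set.Ioo a b, g x ≤ 0) := by
    by_contra h
    push_neg at h
    obtain ⟨⟨x, hx, hxneg⟩, ⟨y, hy, hypos⟩⟩ := h
    have hsub : Set.uIcc x y ⊆ Set.Ioo a b := Set.OrdConnected.uIcc_subset Set.ordConnected_Ioo hx hy
    have hcont : ContinuousOn g (Set.uIcc x y) :=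
      hg.mono (hsub.trans Set.Ioo_subset_Icc_self)
    have h0 : (0:ℝ) ∈ Set.uIcc (g x) (g y) := by
      rw [Set.mem_uIcc]; left; exact ⟨hxneg.le, hypos.le⟩
    obtain ⟨z, hz', hz0⟩ := intermediate_value_uIcc hcont h0
    exact hz z (hsub hz') hz0
  rcases hsign with hpos | hneg
  · have h1 : ∫ x in a..b, |g x| = ∫ x in a..b, g x := by
      rw [intervalIntegral.integral_of_le hab, intervalIntegral.integral_of_le hab,
        MeasureTheory.integral_Ioc_eq_integral_Ioo, MeasureTheory.integral_Ioc_eq_integral_Ioo]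
      exact MeasureTheory.setIntegral_congr_fun measurableSet_Ioo
        (fun x hx => abs_of_nonneg (hpos x hx))
    rw [h1, hFTC]
    exact (le_abs_self _).trans hfb
  · have h1 : ∫ x in a..b, |g x| = ∫ x in a..b, -g x := by
      rw [intervalIntegral.integral_of_le hab, intervalIntegral.integral_of_le hab,
        MeasureTheory.integral_Ioc_eq_integral_Ioo, MeasureTheory.integral_Ioc_eq_integral_Ioo]
      exact MeasureTheory.setIntegral_congr_fun measurableSet_Ioo
        (fun x hx => abs_of_nonpos (hneg x hx))
    rw [h1, intervalIntegral.integral_neg, hFTC]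
    exact (neg_le_abs _).trans hfb

lemma aux_tv (R : ℝ) (hR : 0 ≤ R) (f g : ℝ → ℝ) (k : ℕ) :
    ∀ (a b : ℝ) (T : Finset ℝ), a ≤ b →
    ContinuousOn g (Set.Icc a b) →
    (∀ x ∈ Set.Icc a b, HasDerivAt f (g x) x) →
    (∀ x ∈ Set.Icc a b, |f x| ≤ R) →
    T.card ≤ k →
    (∀ x ∈ Set.Ioo a b, g x = 0 → x ∈ T) →
    ∫ x in a..b, |g x| ≤ 2 * (k + 1) * R := by
  induction k using Nat.strong_induction_on with
  | _ k ih =>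
    intro a b T hab hg hf hfR hcard hT
    by_cases hr : ∃ r ∈ T, r ∈ Set.Ioo a b
    · obtain ⟨r, hrT, hra, hrb⟩ := hr
      have hk1 : 1 ≤ k := le_trans (Finset.card_pos.mpr ⟨r, hrT⟩) hcard
      set T₁ := T.filter (fun x => x < r) with hT₁
      set T₂ := T.filter (fun x => r < x) with hT₂
      have hcard' : T₁.card + T₂.card + 1 ≤ k := by
        have hdisj : Disjoint T₁ T₂ := by
          rw [Finset.disjoint_left]
          intro x hx1 hx2
          rw [hT₁, Finset.mem_filter] at hx1
          rw [hT₂, Finset.mem_filter] at hx2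
          exact absurd (hx1.2.trans hx2.2) (lt_irrefl x)
        have hsub : T₁ ∪ T₂ ⊆ T.erase r := by
          intro x hx
          rcases Finset.mem_union.mp hx with h | h
          · rw [hT₁, Finset.mem_filter] at h
            exact Finset.mem_erase.mpr ⟨ne_of_lt h.2, h.1⟩
          · rw [hT₂, Finset.mem_filter] at h
            exact Finset.mem_erase.mpr ⟨(ne_of_lt h.2).symm, h.1⟩
        have := Finset.card_le_card hsub
        rw [Finset.card_union_of_disjoint hdisj] at this
        have herase : (T.erase r).card = T.card - 1 := Finset.card_erase_of_mem hrT
        omega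
      have h1 : ∫ x in a..r, |g x| ≤ 2 * (T₁.card + 1) * R := by
        apply ih T₁.card (by omega) a r T₁ hra.le
          (hg.mono (Set.Icc_subset_Icc le_rfl hrb.le))
          (fun x hx => hf x ⟨hx.1, hx.2.trans hrb.le⟩)
          (fun x hx => hfR x ⟨hx.1, hx.2.trans hrb.le⟩) le_rfl
        intro x hx hx0
        rw [hT₁, Finset.mem_filter]
        exact ⟨hT x ⟨hx.1, hx.2.trans hrb⟩ hx0, hx.2⟩
      have h2 : ∫ x in r..b, |g x| ≤ 2 * (T₂.card + 1) * R := by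
        apply ih T₂.card (by omega) r b T₂ hrb.le
          (hg.mono (Set.Icc_subset_Icc hra.le le_rfl))
          (fun x hx => hf x ⟨(hra.le).trans hx.1, hx.2⟩)
          (fun x hx => hfR x ⟨(hra.le).trans hx.1, hx.2⟩) le_rfl
        intro x hx hx0
        rw [hT₂, Finset.mem_filter]
        exact ⟨hT x ⟨hra.trans hx.1, hx.2⟩ hx0, hx.1⟩
      have habs : ContinuousOn (fun x => |g x|) (Set.Icc a b) := hg.abs
      have hi1 : IntervalIntegrable (fun x => |g x|) MeasureTheory.volume a r := by
        apply ContinuousOn.intervalIntegrable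
        rw [Set.uIcc_of_le hra.le]
        exact habs.mono (Set.Icc_subset_Icc le_rfl hrb.le)
      have hi2 : IntervalIntegrable (fun x => |g x|) MeasureTheory.volume r b := by
        apply ContinuousOn.intervalIntegrable
        rw [Set.uIcc_of_le hrb.le]
        exact habs.mono (Set.Icc_subset_Icc hra.le le_rfl)
      have hsplit : ∫ x in a..b, |g x| = (∫ x in a..r, |g x|) + ∫ x in r..b, |g x| :=
        (intervalIntegral.integral_add_adjacent_intervals hi1 hi2).symm
      rw [hsplit]
      have : ((T₁.card : ℝ) + 1) + ((T₂.card : ℝ) + 1) ≤ (k : ℝ) + 1 := by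
        have : (T₁.card : ℝ) + (T₂.card : ℝ) + 1 ≤ (k : ℝ) := by exact_mod_cast hcard'
        linarith
      nlinarith [h1, h2, hR]
    · push_neg at hr
      have hz : ∀ x ∈ Set.Ioo a b, g x ≠ 0 := fun x hx h0 => hr x (hT x hx h0) hx
      have := sign_const_case R f g a b hab hg hf hfR hz
      nlinarith [this, hR, Nat.cast_nonneg (α := ℝ) k]

/-- Let `α : [0,s₀] → ℝⁿ` have coordinates `αᵢ = Pᵢ/Qᵢ` with `Pᵢ, Qᵢ` real
polynomials of degree at most `2`, `Qᵢ` nonvanishing on `[0,s₀]`, and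
`|αᵢ(s)| ≤ R` on `[0,s₀]`.  Then the Euclidean length `∫₀^{s₀} ‖α'(s)‖ ds` is
at most `8nR`. -/
theorem length_of_rational_curve_le
    (n : ℕ) (R s₀ : ℝ) (hR : 0 < R) (hs₀ : 0 ≤ s₀)
    (P Q : Fin n → Polynomial ℝ)
    (hP : ∀ i, (P i).degree ≤ 2) (hQ : ∀ i, (Q i).degree ≤ 2)
    (hQne : ∀ i, ∀ s ∈ Set.Icc (0:ℝ) s₀, (Q i).eval s ≠ 0)
    (α : ℝ → (Fin n → ℝ))
    (hα : ∀ s, ∀ i, α s i = (P i).eval s / (Q i).eval s)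
    (hbound : ∀ i, ∀ s ∈ Set.Icc (0:ℝ) s₀, |α s i| ≤ R) :
    ∫ s in (0:ℝ)..s₀,
        Real.sqrt (∑ i, (deriv (fun t => α t i) s) ^ 2) ≤ 8 * n * R := by
  set N : Fin n → Polynomial ℝ :=
    fun i => (P i).derivative * Q i - P i * (Q i).derivative with hNdef
  set g : Fin n → ℝ → ℝ := fun i s => (N i).eval s / ((Q i).eval s)^2 with hgdef
  have hderiv : ∀ i, ∀ s ∈ Set.Icc (0:ℝ) s₀, HasDerivAt (fun t => α t i) (g i s) s := by
    intro i s hs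
    have hfun : (fun t => α t i) = fun t => (P i).eval t / (Q i).eval t :=
      funext fun t => hα t i
    rw [hfun]
    have h := ((P i).hasDerivAt s).fun_div ((Q i).hasDerivAt s) (hQne i s hs)
    refine h.congr_deriv ?_
    simp [hgdef, hNdef]
  have hgc : ∀ i, ContinuousOn (g i) (Set.Icc (0:ℝ) s₀) := by
    intro i
    apply ContinuousOn.div (((N i).continuous).continuousOn)
      ((((Q i).continuous).pow 2).continuousOn)
    intro s hs
    exact pow_ne_zero 2 (hQne i s hs)
  have hcoord : ∀ i, ∫ s in (0:ℝ)..s₀, |g i s| ≤ 8 * R := by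
    intro i
    by_cases h0 : N i = 0
    · have hz : ∀ s, |g i s| = 0 := fun s => by simp [hgdef, h0]
      simp only [hz, intervalIntegral.integral_zero]
      positivity
    · set T := (N i).roots.toFinset with hTdef
      have hTc : T.card ≤ 3 := by
        have h1 : Multiset.card (N i).roots ≤ (N i).natDegree := (N i).card_roots'
        have hPn : (P i).natDegree ≤ 2 := Polynomial.natDegree_le_iff_degree_le.mpr (hP i)
        have hQn : (Q i).natDegree ≤ 2 := Polynomial.natDegree_le_iff_degree_le.mpr (hQ i)
        have hP' : (P i).derivative.natDegree ≤ 1 :=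
          le_trans (Polynomial.natDegree_derivative_le _) (by omega)
        have hQ' : (Q i).derivative.natDegree ≤ 1 :=
          le_trans (Polynomial.natDegree_derivative_le _) (by omega)
        have hd : (N i).natDegree ≤ 3 := by
          rw [hNdef]
          apply le_trans (Polynomial.natDegree_sub_le _ _)
          apply max_le
          · exact le_trans (Polynomial.natDegree_mul_le) (by omega)
          · exact le_trans (Polynomial.natDegree_mul_le) (by omega)
        calc T.card ≤ Multiset.card (N i).roots := (N i).roots.toFinset_card_le
          _ ≤ 3 := le_trans h1 hd
      have hzero : ∀ x ∈ Set.Ioo (0:ℝ) s₀, g i x = 0 → x ∈ T := by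
        intro x hx hx0
        have hxI : x ∈ Set.Icc (0:ℝ) s₀ := Set.Ioo_subset_Icc_self hx
        rw [hgdef] at hx0
        have hden : ((Q i).eval x)^2 ≠ 0 := pow_ne_zero 2 (hQne i x hxI)
        have hnum : (N i).eval x = 0 := by
          rcases div_eq_zero_iff.mp hx0 with h | h
          · exact h
          · exact absurd h hden
        rw [hTdef, Multiset.mem_toFinset]
        exact (Polynomial.mem_roots h0).mpr hnum
      have := aux_tv R hR.le (fun t => α t i) (g i) 3 0 s₀ T hs₀ (hgc i) (hderiv i)
        (fun s hs => hbound i s hs) hTc hzero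
      calc ∫ s in (0:ℝ)..s₀, |g i s| ≤ 2 * ((3:ℕ) + 1) * R := this
        _ = 8 * R := by norm_num
  have heq : (∫ s in (0:ℝ)..s₀, Real.sqrt (∑ i, (deriv (fun t => α t i) s) ^ 2))
      = ∫ s in (0:ℝ)..s₀, Real.sqrt (∑ i, (g i s) ^ 2) := by
    apply intervalIntegral.integral_congr
    intro s hs
    rw [Set.uIcc_of_le hs₀] at hs
    exact congrArg Real.sqrt (Finset.sum_congr rfl fun i _ => by rw [(hderiv i s hs).deriv])
  rw [heq]
  have hc1 : ContinuousOn (fun s => Real.sqrt (∑ i, (g i s) ^ 2)) (Set.Icc (0:ℝ) s₀) := by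
    apply ContinuousOn.sqrt
    exact continuousOn_finset_sum _ fun i _ => (hgc i).pow 2
  have hc2 : ContinuousOn (fun s => ∑ i, |g i s|) (Set.Icc (0:ℝ) s₀) :=
    continuousOn_finset_sum _ fun i _ => (hgc i).abs
  have hi1 : IntervalIntegrable (fun s => Real.sqrt (∑ i, (g i s) ^ 2))
      MeasureTheory.volume 0 s₀ := by
    apply ContinuousOn.intervalIntegrable; rwa [Set.uIcc_of_le hs₀]
  have hi2 : IntervalIntegrable (fun s => ∑ i, |g i s|) MeasureTheory.volume 0 s₀ := by
    apply ContinuousOn.intervalIntegrable; rwa [Set.uIcc_of_le hs₀]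
  have hle1 : (∫ s in (0:ℝ)..s₀, Real.sqrt (∑ i, (g i s) ^ 2))
      ≤ ∫ s in (0:ℝ)..s₀, ∑ i, |g i s| := by
    apply intervalIntegral.integral_mono_on hs₀ hi1 hi2
    intro s _
    have h1 : ∑ i, (g i s)^2 ≤ (∑ i, |g i s|)^2 := by
      calc ∑ i, (g i s)^2 = ∑ i, |g i s|^2 := by simp [sq_abs]
        _ ≤ (∑ i, |g i s|)^2 :=
          Finset.sum_sq_le_sq_sum_of_nonneg (fun i _ => abs_nonneg _)
    calc Real.sqrt (∑ i, (g i s)^2) ≤ Real.sqrt ((∑ i, |g i s|)^2) := Real.sqrt_le_sqrt h1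
      _ = ∑ i, |g i s| := Real.sqrt_sq (Finset.sum_nonneg fun i _ => abs_nonneg _)
  have hsum : (∫ s in (0:ℝ)..s₀, ∑ i, |g i s|) = ∑ i, ∫ s in (0:ℝ)..s₀, |g i s| := by
    apply intervalIntegral.integral_finset_sum
    intro i _
    apply ContinuousOn.intervalIntegrable
    rw [Set.uIcc_of_le hs₀]
    exact (hgc i).abs
  calc (∫ s in (0:ℝ)..s₀, Real.sqrt (∑ i, (g i s) ^ 2))
      ≤ ∫ s in (0:ℝ)..s₀, ∑ i, |g i s| := hle1
    _ = ∑ i, ∫ s in (0:ℝ)..s₀, |g i s| := hsum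
    _ ≤ ∑ _i : Fin n, 8 * R := Finset.sum_le_sum fun i _ => hcoord i
    _ = 8 * n * R := by
        rw [Finset.sum_const, Finset.card_univ, Fintype.card_fin]
        ring
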